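/- Let n ≥ 3 be odd and let m : ZMod n → ℤ. Suppose that for all integers i, t the congruence Δ₁(i, t) + m(i−1) + m(t) ≡ m(t−1) + m(i) + Δ₁(i+1, t+1) (mod n) holds, where m is evaluated at the images of the integers in ZMod n. Then ∑_{k ∈ ZMod n} m(k) ≡ 1 (mod n). -/

import Mathlib

def carry (n η κ : ℤ) : ℤ := (η % n + κ % n - (η + κ) % n) / n

def delta3 (n s i t : ℤ) : ℤ := carry n i (t - i) - carry n (i - s) (t - i)

lemma carry_eq_ite (n η κ : ℤ) (hn : 0 < n) :
    carry n η κ = if η % n + κ % n < n then 0 else 1 := by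
  have ha := Int.emod_nonneg η (by omega : n ≠ 0)
  have ha' := Int.emod_lt_of_pos η hn
  have hb := Int.emod_nonneg κ (by omega : n ≠ 0)
  have hb' := Int.emod_lt_of_pos κ hn
  have hsum : (η + κ) % n = (η % n + κ % n) % n := by rw [Int.add_emod]
  unfold carry
  rw [hsum]
  split
  · next hlt =>
    rw [Int.emod_eq_of_lt (by omega) hlt]
    simp
  · next hge =>
    have h1 : (η % n + κ % n) % n = η % n + κ % n - n := by
      conv_lhs => rw [show η % n + κ % n = (η % n + κ % n - n) + n * 1 from by ring]
      rw [Int.add_mul_emod_self_left]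
      exact Int.emod_eq_of_lt (by omega) (by omega)
    rw [h1, show η % n + κ % n - (η % n + κ % n - n) = n from by ring, Int.ediv_self (by omega)]

lemma neg_emod' (n i : ℤ) (hn : 0 < n) : (-i) % n = if i % n = 0 then 0 else n - i % n := by
  have ha := Int.emod_nonneg i (by omega : n ≠ 0)
  have ha' := Int.emod_lt_of_pos i hn
  rw [Int.neg_emod_eq_sub_emod, Int.sub_emod, Int.emod_self]
  split
  · next h0 => rw [h0]; simp
  · next h0 =>
    rw [show (0:ℤ) - i % n = (n - i % n) + n * (-1) from by ring, Int.add_mul_emod_self_left]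
    exact Int.emod_eq_of_lt (by omega) (by omega)

lemma add_one_emod' (n i : ℤ) (hn : 2 ≤ n) :
    (i + 1) % n = if i % n = n - 1 then 0 else i % n + 1 := by
  have ha := Int.emod_nonneg i (by omega : n ≠ 0)
  have ha' := Int.emod_lt_of_pos i (by omega : (0:ℤ) < n)
  rw [Int.add_emod, Int.emod_eq_of_lt (by omega : (0:ℤ) ≤ 1) (by omega)]
  split
  · next h0 => rw [h0, show n - 1 + 1 = n from by ring, Int.emod_self]
  · next h0 => exact Int.emod_eq_of_lt (by omega) (by omega)

lemma sub_one_emod' (n i : ℤ) (hn : 2 ≤ n) :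
    (i - 1) % n = if i % n = 0 then n - 1 else i % n - 1 := by
  have ha := Int.emod_nonneg i (by omega : n ≠ 0)
  have ha' := Int.emod_lt_of_pos i (by omega : (0:ℤ) < n)
  rw [Int.sub_emod, Int.emod_eq_of_lt (by omega : (0:ℤ) ≤ 1) (by omega)]
  split
  · next h0 =>
    rw [h0, show (0:ℤ) - 1 = (n - 1) + n * (-1) from by ring, Int.add_mul_emod_self_left]
    exact Int.emod_eq_of_lt (by omega) (by omega)
  · next h0 => exact Int.emod_eq_of_lt (by omega) (by omega)

lemma carryC (n i : ℤ) (hn : 2 ≤ n) :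
    carry n i (-i) = if i % n = 0 then 0 else 1 := by
  have ha := Int.emod_nonneg i (by omega : n ≠ 0)
  have ha' := Int.emod_lt_of_pos i (by omega : (0:ℤ) < n)
  rw [carry_eq_ite n i (-i) (by omega), neg_emod' n i (by omega)]
  by_cases h0 : i % n = 0
  · rw [if_pos h0, if_pos (show i % n + 0 < n by omega), if_pos h0]
  · rw [if_neg h0, if_neg (show ¬ (i % n + (n - i % n) < n) by omega), if_neg h0]

lemma carryD (n i : ℤ) (hn : 2 ≤ n) :
    carry n (i + 1) (-i) = if i % n = 0 ∨ i % n = n - 1 then 0 else 1 := by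
  have ha := Int.emod_nonneg i (by omega : n ≠ 0)
  have ha' := Int.emod_lt_of_pos i (by omega : (0:ℤ) < n)
  rw [carry_eq_ite n (i+1) (-i) (by omega), neg_emod' n i (by omega), add_one_emod' n i hn]
  by_cases h0 : i % n = 0
  · rw [if_pos h0, if_neg (show ¬ (i % n = n - 1) by omega),
      if_pos (Or.inl h0), if_pos (show i % n + 1 + 0 < n by omega)]
  · rw [if_neg h0]
    by_cases h1 : i % n = n - 1
    · rw [if_pos h1, if_pos (Or.inr h1), if_pos (show (0:ℤ) + (n - i % n) < n by omega)]
    · rw [if_neg h1, if_neg (show ¬ (i % n = 0 ∨ i % n = n - 1) by tauto),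
        if_neg (show ¬ (i % n + 1 + (n - i % n) < n) by omega)]

lemma carryE (n i : ℤ) (hn : 2 ≤ n) : carry n (i - 1) (-i) = 0 := by
  have ha := Int.emod_nonneg i (by omega : n ≠ 0)
  have ha' := Int.emod_lt_of_pos i (by omega : (0:ℤ) < n)
  rw [carry_eq_ite n (i-1) (-i) (by omega), neg_emod' n i (by omega), sub_one_emod' n i hn]
  by_cases h0 : i % n = 0
  · rw [if_pos h0, if_pos h0, if_pos (show n - 1 + 0 < n by omega)]
  · rw [if_neg h0, if_neg h0, if_pos (show i % n - 1 + (n - i % n) < n by omega)]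

theorem stmt13 (n : ℕ) (hn : 3 ≤ n) (hodd : Odd n) (m : ZMod n → ℤ)
    (h : ∀ i t : ℤ,
      delta3 (n : ℤ) 1 i t + m ((i - 1 : ℤ) : ZMod n) + m ((t : ℤ) : ZMod n) ≡
        m ((t - 1 : ℤ) : ZMod n) + m ((i : ℤ) : ZMod n) +
          delta3 (n : ℤ) 1 (i + 1) (t + 1) [ZMOD n]) :
    (∑ k ∈ Finset.range n, m ((k : ℕ) : ZMod n)) ≡ 1 [ZMOD n] := by
  have hn2 : (2:ℤ) ≤ (n:ℤ) := by exact_mod_cast by omega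
  set g : ZMod n → ZMod n := fun x => ((m x : ℤ) : ZMod n) with hg
  set ee : ZMod n := g ((-1 : ℤ) : ZMod n) - g ((0 : ℤ) : ZMod n) - 1 with hee
  have key : ∀ i : ℤ, i % n ≠ 0 →
      g ((i : ℤ) : ZMod n) = g ((i - 1 : ℤ) : ZMod n) - ee +
        (if (i + 1) % n = 0 then 1 else 0) := by
    intro i hi
    have h0 := h i 0
    have e1 : delta3 (n:ℤ) 1 i 0 = carry n i (-i) - carry n (i - 1) (-i) := by
      unfold delta3; norm_num
    have e2 : delta3 (n:ℤ) 1 (i+1) (0+1) =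
        carry n (i+1) (-i) - carry n i (-i) := by
      unfold delta3
      rw [show (0:ℤ) + 1 - (i + 1) = -i from by ring, show i + 1 - 1 = i from by ring]
    rw [e1, e2, carryE n i hn2, carryC n i hn2, carryD n i hn2] at h0
    rw [if_neg hi] at h0
    have hz := (ZMod.intCast_eq_intCast_iff _ _ _).mpr h0
    have hi1 : (i + 1) % n = 0 ↔ i % n = (n:ℤ) - 1 := by
      rw [add_one_emod' n i hn2]
      have ha := Int.emod_nonneg i (by omega : (n:ℤ) ≠ 0)
      have ha' := Int.emod_lt_of_pos i (by omega : (0:ℤ) < n)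
      split
      · next hc => simp [hc]
      · next hc => simp [hc]; omega
    by_cases hcase : i % n = (n:ℤ) - 1
    · rw [if_pos (Or.inr hcase)] at hz
      rw [if_pos (hi1.mpr hcase)]
      push_cast at hz ⊢
      rw [hee, hg]
      push_cast
      linear_combination -hz
    · rw [if_neg (by tauto)] at hz
      rw [if_neg (fun hc => hcase (hi1.mp hc))]
      push_cast at hz ⊢
      rw [hee, hg]
      push_cast
      linear_combination -hz
  have main : ∀ k : ℕ, k < n →
      g (((k : ℕ) : ℤ) : ZMod n) = g ((0:ℤ) : ZMod n) - (k : ZMod n) * ee +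
        (if k = n - 1 then 1 else 0) := by
    intro k
    induction k with
    | zero => intro _; rw [if_neg (by omega)]; push_cast; ring
    | succ k ih =>
      intro hk1
      have hk : k < n := by omega
      have ihv := ih hk
      rw [if_neg (by omega : ¬ (k = n - 1))] at ihv
      have hkey := key ((k:ℤ) + 1) (by
        rw [Int.emod_eq_of_lt (by omega) (by exact_mod_cast hk1)]
        omega)
      rw [show ((k:ℤ) + 1 - 1) = (k:ℤ) from by ring] at hkey
      have hmod : ((k:ℤ) + 1 + 1) % n = 0 ↔ (k + 1 = n - 1) := by
        constructor
        · intro hm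
          have hd : ((n:ℤ)) ∣ ((k:ℤ) + 1 + 1) := Int.dvd_of_emod_eq_zero hm
          have := Int.le_of_dvd (by omega) hd
          omega
        · intro hm
          rw [show (k:ℤ) + 1 + 1 = n from by omega, Int.emod_self]
      have hcast : (((k:ℕ) + 1 : ℕ) : ℤ) = (k:ℤ) + 1 := by push_cast; ring
      rw [hcast, hkey, ihv]
      by_cases hc : k + 1 = n - 1
      · rw [if_pos (hmod.mpr hc), if_pos hc]
        push_cast
        ring
      · rw [if_neg (fun hm => hc (hmod.mp hm)), if_neg hc]
        push_cast
        ring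
  -- finish
  rw [← ZMod.intCast_eq_intCast_iff]
  push_cast
  have hsum : ∀ k ∈ Finset.range n, ((m ((k:ℕ) : ZMod n) : ℤ) : ZMod n) =
      g ((0:ℤ) : ZMod n) - (k : ZMod n) * ee + (if k = n - 1 then 1 else 0) := by
    intro k hk
    rw [Finset.mem_range] at hk
    have := main k hk
    rw [hg] at this ⊢
    simpa using this
  rw [Finset.sum_congr rfl hsum]
  rw [Finset.sum_add_distrib, Finset.sum_sub_distrib]
  have h1 : ∑ k ∈ Finset.range n, g ((0:ℤ) : ZMod n) = 0 := by
    rw [Finset.sum_const, Finset.card_range]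
    simp [ZMod.natCast_self]
  have h2 : ∑ k ∈ Finset.range n, (k : ZMod n) * ee = 0 := by
    rw [← Finset.sum_mul]
    have : (∑ k ∈ Finset.range n, (k : ZMod n)) = 0 := by
      have hc : (∑ k ∈ Finset.range n, (k : ZMod n)) = ((∑ k ∈ Finset.range n, k : ℕ) : ZMod n) := by
        push_cast; rfl
      rw [hc, Finset.sum_range_id]
      obtain ⟨j, hj⟩ := hodd
      have h4 : n * (n - 1) = n * j * 2 := by
        rw [show n - 1 = 2 * j from by omega]; ring
      rw [show n * (n - 1) / 2 = n * j from by rw [h4, Nat.mul_div_cancel _ (by norm_num)]]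
      push_cast
      simp [ZMod.natCast_self]
    rw [this, zero_mul]
  have h3 : (∑ k ∈ Finset.range n, (if k = n - 1 then (1:ZMod n) else 0)) = 1 := by
    rw [Finset.sum_ite_eq' (Finset.range n) (n-1) (fun _ => (1:ZMod n))]
    rw [if_pos (Finset.mem_range.mpr (by omega))]
  rw [h1, h2, h3]
  ring
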